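/- Let r ≥ 2 be an integer, set n = 2r − 1, and let t be a rational number. Let C be the (n−1)×(n−1) rational matrix with entries C_{i,j} = t − (n−2i+2)(n−1−i) − 1 if i = j; C_{i,j} = (i−1)(n−i) if i = j+1; C_{i,j} = −(n−1−i)(n−i) if i = j−1; and C_{i,j} = 0 otherwise. Then det C = (t − n + 1) · (t − n + 1 − (r−1)²) · ∏_{i=1}^{r−2} (t − n + 1 − (r−1)² + i²)². -/

import Mathlib

/-- Coefficient of `x^e` in `(x-1)(c-x)(x-1)^d + ((c-2x+2)(c-1-x)+1)x^d - (c-1-x)(c-x)(x+1)^d`. -/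
def coefQ (c : ℚ) (d e : ℕ) : ℚ :=
  (if 2 ≤ e then ((-1 : ℚ) ^ (d + e) * (-1) - 1) * (d.choose (e - 2) : ℚ) else 0)
  + (if 1 ≤ e then ((-1 : ℚ) ^ (d + e) * (-(c + 1)) + (2 * c - 1)) * (d.choose (e - 1) : ℚ) else 0)
  + ((-1 : ℚ) ^ (d + e) * (-c) - c * (c - 1)) * (d.choose e : ℚ)
  + (if e = d + 2 then 2 else 0) + (if e = d + 1 then -(3 * c) else 0)
  + (if e = d then c ^ 2 + c - 1 else 0)

lemma neg_one_pow_sub' (d k : ℕ) (h : k ≤ d) : (-1 : ℚ) ^ (d + k) = (-1) ^ (d - k) := by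
  have h2 : d + k = (d - k) + 2 * k := by omega
  rw [h2, pow_add, pow_mul]
  norm_num

lemma coefQ_tri (c : ℚ) (d e : ℕ) (h : d < e) : coefQ c d e = 0 := by
  unfold coefQ
  rcases eq_or_lt_of_le (Nat.succ_le_of_lt h) with he | h2
  · -- e = d + 1
    have he' : e = d + 1 := he.symm
    subst he'
    have h1 : (-1 : ℚ) ^ (d + (d + 1)) = -1 := by
      have : d + (d + 1) = 2 * d + 1 := by omega
      rw [this, pow_succ, pow_mul]; norm_num
    have h3 : d.choose (d + 1) = 0 := Nat.choose_eq_zero_of_lt (by omega)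
    have h4 : d + 1 - 1 = d := by omega
    simp [h1, h3, h4]
    ring
  · rcases eq_or_lt_of_le (Nat.succ_le_of_lt h2) with he | h3
    · -- e = d + 2
      have he' : e = d + 2 := he.symm
      subst he'
      have h1 : (-1 : ℚ) ^ (d + (d + 2)) = 1 := by
        have : d + (d + 2) = 2 * (d + 1) := by omega
        rw [this, pow_mul]; norm_num
      have h3 : d.choose (d + 2) = 0 := Nat.choose_eq_zero_of_lt (by omega)
      have h4 : d.choose (d + 1) = 0 := Nat.choose_eq_zero_of_lt (by omega)
      have h5 : d + 2 - 1 = d + 1 := by omega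
      have h6 : d + 2 - 2 = d := by omega
      simp [h1, h3, h4, h5, h6]
      ring
    · -- e ≥ d + 3
      have c0 : d.choose e = 0 := Nat.choose_eq_zero_of_lt (by omega)
      have c1 : d.choose (e - 1) = 0 := Nat.choose_eq_zero_of_lt (by omega)
      have c2 : d.choose (e - 2) = 0 := Nat.choose_eq_zero_of_lt (by omega)
      have n1 : e ≠ d + 2 := by omega
      have n2 : e ≠ d + 1 := by omega
      have n3 : e ≠ d := by omega
      simp [c0, c1, c2, n1, n2, n3]

lemma coefQ_diag (c : ℚ) (d : ℕ) : coefQ c d d = c - 1 + d * (c - 1 - d) := by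
  unfold coefQ
  have h1 : (-1 : ℚ) ^ (d + d) = 1 := by
    have : d + d = 2 * d := by omega
    rw [this, pow_mul]; norm_num
  match d with
  | 0 => norm_num [h1]; ring
  | 1 => norm_num [h1]; ring
  | (k + 2) =>
    have h2 : k + 2 - 2 = k := by omega
    have h3 : k + 2 - 1 = k + 1 := by omega
    have h4 : (k+2).choose k = (k+2).choose 2 := by
      have h := Nat.choose_symm (show k ≤ k + 2 by omega)
      rw [show k + 2 - k = 2 from by omega] at h
      exact h.symm
    have h5 : (((k+2).choose 2 : ℕ) : ℚ) = ((k : ℚ)+2) * (((k : ℚ)+2) - 1) / 2 := by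
      have h := Nat.cast_choose_two (K := ℚ) (k+2)
      push_cast at h ⊢
      linarith
    have h6 : (k+2).choose (k+1) = (k+2).choose 1 := by
      have h := Nat.choose_symm (show k + 1 ≤ k + 2 by omega)
      rw [show k + 2 - (k + 1) = 1 from by omega] at h
      exact h.symm
    have n1 : ¬ (k + 2 = k + 2 + 2) := by omega
    have n2 : ¬ (k + 2 = k + 2 + 1) := by omega
    simp only [h1, h2, h3, h4, h6, if_pos, n1, n2, if_false, if_neg, Nat.choose_self,
      Nat.choose_one_right, if_true, Nat.cast_add, Nat.cast_ofNat, Nat.cast_one]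
    rw [h5]
    push_cast
    ring

lemma coefQ_sum (c : ℚ) (d N : ℕ) (hN : d + 3 ≤ N) (x : ℚ) :
    ∑ e ∈ Finset.range N, x ^ e * coefQ c d e =
      (x - 1) * (c - x) * (x - 1) ^ d + ((c - 2 * x + 2) * (c - 1 - x) + 1) * x ^ d
        - (c - 1 - x) * (c - x) * (x + 1) ^ d := by
  obtain ⟨M, rfl⟩ : ∃ M, N = M + 2 := ⟨N - 2, by omega⟩
  have hdM : d + 1 ≤ M := by omega
  -- the six pieces
  set A : ℕ → ℚ := fun e =>
    x ^ e * (if 2 ≤ e then ((-1 : ℚ) ^ (d + e) * (-1) - 1) * (d.choose (e - 2) : ℚ) else 0) with hA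
  set B : ℕ → ℚ := fun e =>
    x ^ e * (if 1 ≤ e then ((-1 : ℚ) ^ (d + e) * (-(c + 1)) + (2 * c - 1)) * (d.choose (e - 1) : ℚ) else 0) with hB
  set Cc : ℕ → ℚ := fun e =>
    x ^ e * (((-1 : ℚ) ^ (d + e) * (-c) - c * (c - 1)) * (d.choose e : ℚ)) with hCc
  have expand : ∀ e ∈ Finset.range (M + 2), x ^ e * coefQ c d e =
      A e + B e + Cc e + (if e = d + 2 then x ^ e * 2 else 0)
        + (if e = d + 1 then x ^ e * (-(3 * c)) else 0)
        + (if e = d then x ^ e * (c ^ 2 + c - 1) else 0) := by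
    intro e _
    simp only [hA, hB, hCc, coefQ]
    split_ifs <;> ring
  rw [Finset.sum_congr rfl expand]
  rw [Finset.sum_add_distrib, Finset.sum_add_distrib, Finset.sum_add_distrib,
    Finset.sum_add_distrib, Finset.sum_add_distrib]
  rw [Finset.sum_ite_eq' (Finset.range (M + 2)) (d + 2) (fun e => x ^ e * 2),
    Finset.sum_ite_eq' (Finset.range (M + 2)) (d + 1) (fun e => x ^ e * (-(3 * c))),
    Finset.sum_ite_eq' (Finset.range (M + 2)) d (fun e => x ^ e * (c ^ 2 + c - 1))]
  rw [if_pos (Finset.mem_range.2 (by omega)), if_pos (Finset.mem_range.2 (by omega)),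
    if_pos (Finset.mem_range.2 (by omega))]
  -- reduce A-sum
  have hAsum : ∑ e ∈ Finset.range (M + 2), A e =
      ∑ k ∈ Finset.range (d + 1),
        x ^ (k + 2) * (((-1 : ℚ) ^ (d + (k + 2)) * (-1) - 1) * (d.choose k : ℚ)) := by
    rw [Finset.sum_range_succ', Finset.sum_range_succ']
    have hA0 : A 0 = 0 := by simp [hA]
    have hA1 : A (0 + 1) = 0 := by simp [hA]
    rw [hA0, hA1, add_zero, add_zero]
    have h1 : ∀ k ∈ Finset.range M, A (k + 1 + 1) =
        x ^ (k + 2) * (((-1 : ℚ) ^ (d + (k + 2)) * (-1) - 1) * (d.choose k : ℚ)) := by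
      intro k _
      simp only [hA]
      rw [if_pos (by omega)]
      rfl
    rw [Finset.sum_congr rfl h1]
    rw [← Finset.sum_subset (Finset.range_subset_range.2 hdM)]
    intro e he hne
    have : d < e := by simp only [Finset.mem_range] at he hne; omega
    rw [Nat.choose_eq_zero_of_lt this]
    simp
  -- reduce B-sum
  have hBsum : ∑ e ∈ Finset.range (M + 2), B e =
      ∑ k ∈ Finset.range (d + 1),
        x ^ (k + 1) * (((-1 : ℚ) ^ (d + (k + 1)) * (-(c + 1)) + (2 * c - 1)) * (d.choose k : ℚ)) := by
    rw [Finset.sum_range_succ']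
    have hB0 : B 0 = 0 := by simp [hB]
    rw [hB0, add_zero]
    have h1 : ∀ k ∈ Finset.range (M + 1), B (k + 1) =
        x ^ (k + 1) * (((-1 : ℚ) ^ (d + (k + 1)) * (-(c + 1)) + (2 * c - 1)) * (d.choose k : ℚ)) := by
      intro k _
      simp only [hB]
      rw [if_pos (by omega)]
      rfl
    rw [Finset.sum_congr rfl h1]
    rw [← Finset.sum_subset (Finset.range_subset_range.2 (by omega : d + 1 ≤ M + 1))]
    intro e he hne
    have : d < e := by simp only [Finset.mem_range] at he hne; omega
    rw [Nat.choose_eq_zero_of_lt this]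
    simp
  -- reduce C-sum
  have hCsum : ∑ e ∈ Finset.range (M + 2), Cc e = ∑ k ∈ Finset.range (d + 1), Cc k := by
    rw [← Finset.sum_subset (Finset.range_subset_range.2 (by omega : d + 1 ≤ M + 2))]
    intro e he hne
    have : d < e := by simp only [Finset.mem_range] at he hne; omega
    simp only [hCc]
    rw [Nat.choose_eq_zero_of_lt this]
    simp
  rw [hAsum, hBsum, hCsum]
  -- expand RHS binomials
  have hxm : (x - 1) ^ d = ∑ k ∈ Finset.range (d + 1), x ^ k * (-1 : ℚ) ^ (d - k) * (d.choose k : ℚ) := by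
    rw [show x - 1 = x + (-1) by ring, add_pow]
  have hxp : (x + 1) ^ d = ∑ k ∈ Finset.range (d + 1), x ^ k * (1 : ℚ) ^ (d - k) * (d.choose k : ℚ) := by
    rw [add_pow]
  rw [hxm, hxp, Finset.mul_sum, Finset.mul_sum]
  rw [← Finset.sum_add_distrib, ← Finset.sum_add_distrib]
  have hterm : ∀ k ∈ Finset.range (d + 1),
      x ^ (k + 2) * (((-1 : ℚ) ^ (d + (k + 2)) * (-1) - 1) * (d.choose k : ℚ))
        + x ^ (k + 1) * (((-1 : ℚ) ^ (d + (k + 1)) * (-(c + 1)) + (2 * c - 1)) * (d.choose k : ℚ))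
        + Cc k
      = (x - 1) * (c - x) * (x ^ k * (-1 : ℚ) ^ (d - k) * (d.choose k : ℚ))
        - (c - 1 - x) * (c - x) * (x ^ k * (1 : ℚ) ^ (d - k) * (d.choose k : ℚ)) := by
    intro k hk
    have hkd : k ≤ d := by simp only [Finset.mem_range] at hk; omega
    have e0 : (-1 : ℚ) ^ (d + k) = (-1) ^ (d - k) := neg_one_pow_sub' d k hkd
    have e1 : (-1 : ℚ) ^ (d + (k + 1)) = -(-1 : ℚ) ^ (d - k) := by
      rw [show d + (k + 1) = (d + k) + 1 by omega, pow_succ, e0]; ring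
    have e2 : (-1 : ℚ) ^ (d + (k + 2)) = (-1 : ℚ) ^ (d - k) := by
      rw [show d + (k + 2) = (d + k) + 2 by omega, pow_add, e0]; ring
    simp only [hCc, e0, e1, e2, one_pow]
    ring
  have hsum2 : ∑ k ∈ Finset.range (d + 1),
      (x ^ (k + 2) * (((-1 : ℚ) ^ (d + (k + 2)) * (-1) - 1) * (d.choose k : ℚ))
        + x ^ (k + 1) * (((-1 : ℚ) ^ (d + (k + 1)) * (-(c + 1)) + (2 * c - 1)) * (d.choose k : ℚ))
        + Cc k)
      = ∑ k ∈ Finset.range (d + 1),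
        ((x - 1) * (c - x) * (x ^ k * (-1 : ℚ) ^ (d - k) * (d.choose k : ℚ))
          - (c - 1 - x) * (c - x) * (x ^ k * (1 : ℚ) ^ (d - k) * (d.choose k : ℚ))) :=
    Finset.sum_congr rfl hterm
  rw [hsum2, Finset.sum_sub_distrib]
  ring

lemma coefQ_sum'' (c : ℚ) (d m : ℕ) (hd : d < m) (x : ℚ) :
    ∑ e ∈ Finset.range m, x ^ e * coefQ c d e =
      (x - 1) * (c - x) * (x - 1) ^ d + ((c - 2 * x + 2) * (c - 1 - x) + 1) * x ^ d
        - (c - 1 - x) * (c - x) * (x + 1) ^ d := by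
  rw [Finset.sum_subset (Finset.range_subset_range.2 (show m ≤ m + d + 3 by omega))
    (fun e he hne => by
      have hde : d < e := by simp only [Finset.mem_range] at he hne; omega
      rw [coefQ_tri c d e hde, mul_zero])]
  exact coefQ_sum c d (m + d + 3) (by omega) x

lemma finSumIte (m k : ℕ) (f : ℕ → ℚ) :
    ∑ j : Fin m, (if (j : ℕ) = k then f (j : ℕ) else 0) = if k < m then f k else 0 := by
  rw [Fin.sum_univ_eq_sum_range (fun jv => if jv = k then f jv else 0) m,
    Finset.sum_ite_eq' (Finset.range m) k f]
  simp [Finset.mem_range]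

lemma finSumIteShift (m k : ℕ) (f : ℕ → ℚ) :
    ∑ j : Fin m, (if (j : ℕ) + 1 = k then f (j : ℕ) else 0) =
      if 1 ≤ k ∧ k ≤ m then f (k - 1) else 0 := by
  rw [Fin.sum_univ_eq_sum_range (fun jv => if jv + 1 = k then f jv else 0) m]
  by_cases h : 1 ≤ k ∧ k ≤ m
  · rw [if_pos h]
    rw [Finset.sum_congr rfl (fun jv _ =>
      show (if jv + 1 = k then f jv else 0) = (if jv = k - 1 then f jv else 0) by
        split_ifs with h1 h2 <;> first | rfl | (exfalso; omega))]
    rw [Finset.sum_ite_eq' (Finset.range m) (k - 1) f, if_pos (Finset.mem_range.2 (by omega))]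
  · rw [if_neg h]
    apply Finset.sum_eq_zero
    intro jv hjv
    rw [if_neg]
    simp only [Finset.mem_range] at hjv
    omega

theorem stmt_5 (r : ℕ) (hr : 2 ≤ r) (t : ℚ) (n : ℕ) (hn : n = 2 * r - 1)
    (C : Matrix (Fin (n - 1)) (Fin (n - 1)) ℚ)
    (hC : ∀ i j : Fin (n - 1), C i j =
      if i.val = j.val then
        t - ((n : ℚ) - 2 * ((i.val : ℚ) + 1) + 2) * ((n : ℚ) - 1 - ((i.val : ℚ) + 1)) - 1
      else if i.val = j.val + 1 then
        (((i.val : ℚ) + 1) - 1) * ((n : ℚ) - ((i.val : ℚ) + 1))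
      else if j.val = i.val + 1 then
        -(((n : ℚ) - 1 - ((i.val : ℚ) + 1)) * ((n : ℚ) - ((i.val : ℚ) + 1)))
      else 0) :
    C.det = (t - (n : ℚ) + 1) * (t - (n : ℚ) + 1 - ((r : ℚ) - 1) ^ 2) *
      ∏ i ∈ Finset.Icc 1 (r - 2),
        (t - (n : ℚ) + 1 - ((r : ℚ) - 1) ^ 2 + (i : ℚ) ^ 2) ^ 2 := by
  have hm2 : 2 ≤ n - 1 := by omega
  have hn3 : 3 ≤ n := by omega
  set P : Matrix (Fin (n - 1)) (Fin (n - 1)) ℚ :=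
    Matrix.of fun i e => (-1 : ℚ) ^ (i : ℕ) * ((i : ℚ) + 1) ^ (e : ℕ) with hP
  set U : Matrix (Fin (n - 1)) (Fin (n - 1)) ℚ :=
    Matrix.of fun e d' => (if e = d' then t else 0) - coefQ (n : ℚ) (d' : ℕ) (e : ℕ) with hU
  -- key intertwining identity
  have hCP : C * P = P * U := by
    ext i d'
    rw [Matrix.mul_apply, Matrix.mul_apply]
    set x : ℚ := (i : ℚ) + 1 with hx
    -- RHS
    have hR : ∑ e, P i e * U e d' = (-1 : ℚ) ^ (i : ℕ) *
        (t * x ^ (d' : ℕ) -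
          ((x - 1) * ((n : ℚ) - x) * (x - 1) ^ (d' : ℕ)
            + (((n : ℚ) - 2 * x + 2) * ((n : ℚ) - 1 - x) + 1) * x ^ (d' : ℕ)
            - ((n : ℚ) - 1 - x) * ((n : ℚ) - x) * (x + 1) ^ (d' : ℕ))) := by
      have h1 : ∀ e : Fin (n - 1), P i e * U e d' =
          (if e = d' then P i e * t else 0) - (-1 : ℚ) ^ (i : ℕ) * (x ^ (e : ℕ) * coefQ (n : ℚ) (d' : ℕ) (e : ℕ)) := by
        intro e
        simp only [hP, hU, Matrix.of_apply]
        split_ifs <;> ring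
      rw [Finset.sum_congr rfl fun e _ => h1 e, Finset.sum_sub_distrib]
      rw [Finset.sum_ite_eq' Finset.univ d' (fun e => P i e * t), if_pos (Finset.mem_univ d')]
      rw [← Finset.mul_sum]
      have h2 : ∑ e : Fin (n - 1), x ^ (e : ℕ) * coefQ (n : ℚ) (d' : ℕ) (e : ℕ)
          = ∑ e ∈ Finset.range (n - 1), x ^ e * coefQ (n : ℚ) (d' : ℕ) e :=
        Fin.sum_univ_eq_sum_range (fun e => x ^ e * coefQ (n : ℚ) (d' : ℕ) e) (n - 1)
      rw [h2, coefQ_sum'' (n : ℚ) (d' : ℕ) (n - 1) d'.isLt x]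
      simp only [hP, Matrix.of_apply, ← hx]
      ring
    rw [hR]
    -- LHS
    have hL : ∀ j : Fin (n - 1), C i j * P j d' =
        (if (j : ℕ) = (i : ℕ) then
            (t - ((n : ℚ) - 2 * x + 2) * ((n : ℚ) - 1 - x) - 1) * ((-1 : ℚ) ^ (j : ℕ) * ((j : ℚ) + 1) ^ (d' : ℕ)) else 0)
        + (if (j : ℕ) + 1 = (i : ℕ) then
            ((x - 1) * ((n : ℚ) - x)) * ((-1 : ℚ) ^ (j : ℕ) * ((j : ℚ) + 1) ^ (d' : ℕ)) else 0)
        + (if (j : ℕ) = (i : ℕ) + 1 then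
            (-(((n : ℚ) - 1 - x) * ((n : ℚ) - x))) * ((-1 : ℚ) ^ (j : ℕ) * ((j : ℚ) + 1) ^ (d' : ℕ)) else 0) := by
      intro j
      rw [hC]
      simp only [hP, Matrix.of_apply, ← hx]
      by_cases h1 : (i : ℕ) = (j : ℕ)
      · rw [if_pos h1, if_pos (show (j : ℕ) = (i : ℕ) from h1.symm),
          if_neg (show ¬(j : ℕ) + 1 = (i : ℕ) by omega),
          if_neg (show ¬(j : ℕ) = (i : ℕ) + 1 by omega)]
        have : ((j : ℕ) : ℚ) = ((i : ℕ) : ℚ) := by exact_mod_cast h1.symm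
        rw [this]
        ring
      · rw [if_neg h1]
        by_cases h2 : (i : ℕ) = (j : ℕ) + 1
        · rw [if_pos h2, if_neg (show ¬(j : ℕ) = (i : ℕ) by omega),
            if_pos (show (j : ℕ) + 1 = (i : ℕ) from h2.symm),
            if_neg (show ¬(j : ℕ) = (i : ℕ) + 1 by omega)]
          have : ((i : ℕ) : ℚ) = ((j : ℕ) : ℚ) + 1 := by exact_mod_cast h2
          rw [hx, this]
          ring
        · rw [if_neg h2]
          by_cases h3 : (j : ℕ) = (i : ℕ) + 1
          · rw [if_pos h3, if_neg (show ¬(j : ℕ) = (i : ℕ) by omega),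
              if_neg (show ¬(j : ℕ) + 1 = (i : ℕ) by omega), if_pos h3]
            ring
          · rw [if_neg h3, if_neg (show ¬(j : ℕ) = (i : ℕ) by omega),
              if_neg (show ¬(j : ℕ) + 1 = (i : ℕ) by omega), if_neg h3]
            ring
    rw [Finset.sum_congr rfl fun j _ => hL j]
    rw [Finset.sum_add_distrib, Finset.sum_add_distrib]
    rw [finSumIte (n - 1) (i : ℕ)
        (fun jv => (t - ((n : ℚ) - 2 * x + 2) * ((n : ℚ) - 1 - x) - 1) * ((-1 : ℚ) ^ jv * ((jv : ℚ) + 1) ^ (d' : ℕ))),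
      finSumIteShift (n - 1) (i : ℕ)
        (fun jv => ((x - 1) * ((n : ℚ) - x)) * ((-1 : ℚ) ^ jv * ((jv : ℚ) + 1) ^ (d' : ℕ))),
      finSumIte (n - 1) ((i : ℕ) + 1)
        (fun jv => (-(((n : ℚ) - 1 - x) * ((n : ℚ) - x))) * ((-1 : ℚ) ^ jv * ((jv : ℚ) + 1) ^ (d' : ℕ)))]
    rw [if_pos i.isLt]
    by_cases hi0 : (i : ℕ) = 0
    · rw [if_neg (by omega), if_pos (by omega)]
      rw [hx, hi0]
      push_cast
      ring
    · -- i ≥ 1 : subdiagonal term present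
      rw [if_pos (by constructor <;> omega)]
      have hc1 : (((i : ℕ) - 1 : ℕ) : ℚ) = ((i : ℕ) : ℚ) - 1 := by
        rw [Nat.cast_sub (by omega : 1 ≤ (i : ℕ))]; norm_num
      have hs2 : (-1 : ℚ) ^ ((i : ℕ) - 1) = -(-1 : ℚ) ^ (i : ℕ) := by
        conv_rhs => rw [show (i : ℕ) = ((i : ℕ) - 1) + 1 by omega, pow_succ]
        ring
      rw [hc1, hs2]
      by_cases hitop : (i : ℕ) + 1 < n - 1
      · rw [if_pos hitop]
        have hc2 : (((i : ℕ) + 1 : ℕ) : ℚ) = ((i : ℕ) : ℚ) + 1 := by push_cast; ring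
        rw [hc2, pow_succ, hx]
        ring
      · rw [if_neg hitop]
        have hcn : ((i : ℕ) : ℚ) = (n : ℚ) - 2 := by
          have h1 : (i : ℕ) = n - 2 := by omega
          rw [h1, Nat.cast_sub (by omega : 2 ≤ n)]; norm_num
        rw [hx, hcn]
        try ring
  -- P is invertible
  have hPfact : P = Matrix.diagonal (fun i : Fin (n - 1) => (-1 : ℚ) ^ (i : ℕ)) *
      Matrix.vandermonde (fun i : Fin (n - 1) => ((i : ℚ) + 1)) := by
    ext i e
    rw [Matrix.diagonal_mul]
    simp [hP, Matrix.vandermonde]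
  have hPdet : P.det ≠ 0 := by
    rw [hPfact, Matrix.det_mul, Matrix.det_diagonal]
    apply mul_ne_zero
    · exact Finset.prod_ne_zero_iff.2 fun i _ => pow_ne_zero _ (by norm_num)
    · rw [Ne, Matrix.det_vandermonde_eq_zero_iff]
      rintro ⟨i, j, hij, hne⟩
      have : ((i : ℕ) : ℚ) = ((j : ℕ) : ℚ) := by linarith
      exact hne (Fin.ext (by exact_mod_cast this))
  have hdet : C.det = U.det := by
    have h := congrArg Matrix.det hCP
    rw [Matrix.det_mul, Matrix.det_mul, mul_comm P.det U.det] at h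
    exact mul_right_cancel₀ hPdet h
  have hUtri : U.BlockTriangular id := by
    intro e d' hlt
    simp only [hU, Matrix.of_apply]
    rw [if_neg (by exact Fin.ne_of_gt hlt), coefQ_tri _ _ _ (show (d' : ℕ) < (e : ℕ) from hlt)]
    ring
  rw [hdet, Matrix.det_of_upperTriangular hUtri]
  have hUdiag : ∀ d : Fin (n - 1), U d d =
      t - ((n : ℚ) - 1 + ((d : ℕ) : ℚ) * ((n : ℚ) - 1 - ((d : ℕ) : ℚ))) := by
    intro d
    simp only [hU, Matrix.of_apply]
    rw [if_true, coefQ_diag]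
    try ring
  rw [Finset.prod_congr rfl fun d _ => hUdiag d]
  rw [Fin.prod_univ_eq_prod_range
    (fun dv => t - ((n : ℚ) - 1 + (dv : ℚ) * ((n : ℚ) - 1 - (dv : ℚ)))) (n - 1)]
  -- final arithmetic
  have hc : (n : ℚ) = 2 * (r : ℚ) - 1 := by
    rw [hn, Nat.cast_sub (by omega : 1 ≤ 2 * r)]; push_cast; ring
  set G : ℕ → ℚ := fun j => t - (n : ℚ) + 1 - ((r : ℚ) - 1) ^ 2 + (j : ℚ) ^ 2 with hG
  have hrr : n - 1 = (r - 1) + (r - 1) := by omega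
  rw [hrr, Finset.prod_range_add]
  have hcr1 : ((r - 1 : ℕ) : ℚ) = (r : ℚ) - 1 := by
    rw [Nat.cast_sub (by omega : 1 ≤ r)]; norm_num
  have h1 : ∀ i ∈ Finset.range (r - 1),
      (t - ((n : ℚ) - 1 + (i : ℚ) * ((n : ℚ) - 1 - (i : ℚ)))) = G ((r - 1 - 1 - i) + 1) := by
    intro i hi
    simp only [Finset.mem_range] at hi
    have he : (r - 1 - 1 - i) + 1 = r - 1 - i := by omega
    have hcast : (((r - 1 - i : ℕ)) : ℚ) = (r : ℚ) - 1 - (i : ℚ) := by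
      rw [Nat.cast_sub (by omega : i ≤ r - 1), hcr1]
    rw [he]
    simp only [hG]
    rw [hcast, hc]
    ring
  rw [Finset.prod_congr rfl h1, Finset.prod_range_reflect (fun k => G (k + 1)) (r - 1)]
  have h2 : ∀ i ∈ Finset.range (r - 1),
      (t - ((n : ℚ) - 1 + ((r - 1 + i : ℕ) : ℚ) * ((n : ℚ) - 1 - ((r - 1 + i : ℕ) : ℚ)))) = G i := by
    intro i hi
    have hcast : ((r - 1 + i : ℕ) : ℚ) = (r : ℚ) - 1 + (i : ℚ) := by
      rw [Nat.cast_add, hcr1]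
    simp only [hG]
    rw [hcast, hc]
    ring
  rw [Finset.prod_congr rfl h2]
  rw [show r - 1 = (r - 2) + 1 by omega, Finset.prod_range_succ, Finset.prod_range_succ']
  have hGr : G ((r - 2) + 1) = t - (n : ℚ) + 1 := by
    simp only [hG]
    have : ((r - 2) + 1 : ℕ) = r - 1 := by omega
    rw [this, hcr1]
    ring
  rw [hGr]
  have hQ2 : (∏ k ∈ Finset.range (r - 2),
      (t - (n : ℚ) + 1 - ((r : ℚ) - 1) ^ 2 + ((k + 1 : ℕ) : ℚ) ^ 2))
      = ∏ k ∈ Finset.range (r - 2), G (k + 1) :=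
    Finset.prod_congr rfl fun k _ => rfl
  have hlast : (t - (n : ℚ) + 1 - ((r : ℚ) - 1) ^ 2 + ((0 : ℕ) : ℚ) ^ 2)
      = t - (n : ℚ) + 1 - ((r : ℚ) - 1) ^ 2 := by norm_num
  rw [hQ2, hlast]
  -- rewrite RHS product
  have hRHS : ∏ i ∈ Finset.Icc 1 (r - 2),
      (t - (n : ℚ) + 1 - ((r : ℚ) - 1) ^ 2 + (i : ℚ) ^ 2) ^ 2
      = (∏ i ∈ Finset.range (r - 2), G (i + 1)) ^ 2 := by
    rw [← Finset.Ico_add_one_right_eq_Icc, Finset.prod_Ico_eq_prod_range]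
    rw [show r - 2 + 1 - 1 = r - 2 by omega]
    rw [← Finset.prod_pow]
    refine Finset.prod_congr rfl fun i _ => ?_
    simp only [hG]
    rw [show 1 + i = i + 1 by omega]
  rw [hRHS]
  ring
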